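/- arXiv:2104.02534 — 4 statements merged into one kernel-verified Lean document; each statement's English description precedes it below -/
import Mathlib

section
/- Every direct product of two finite nonempty chains admits a Czédli diagram: for all natural numbers m and n, the finite lattice Fin (m+1) × Fin (n+1) (with the componentwise order) has a Czédli diagram. -/
/-- An edge from `p` to `q` (drawn with `p.2 < q.2`) is *normal* if it has slope 45° or 135°. -/
def IsNormalEdge (p q : ℝ × ℝ) : Prop :=
  q.2 - p.2 = |q.1 - p.1|

/-- An edge from `p` to `q` is *steep* if its slope is strictly between 45° and 135°. -/
def IsSteepEdge (p q : ℝ × ℝ) : Prop :=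
  |q.1 - p.1| < q.2 - p.2

/-- A planar diagram of a lattice `L`: an injective map into the plane, increasing in the
second coordinate, where the closed segment of a covering pair contains no other vertex,
and segments of distinct covering pairs meet only in common endpoints. -/
def IsPlanarDiagram {L : Type*} [Lattice L] (f : L → ℝ × ℝ) : Prop :=
  Function.Injective f ∧
  (∀ x y : L, x < y → (f x).2 < (f y).2) ∧
  (∀ x y : L, x ⋖ y → ∀ z : L, z ≠ x → z ≠ y → f z ∉ segment ℝ (f x) (f y)) ∧
  (∀ x y x' y' : L, x ⋖ y → x' ⋖ y' → (x, y) ≠ (x', y') →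
    ∀ p : ℝ × ℝ, p ∈ segment ℝ (f x) (f y) → p ∈ segment ℝ (f x') (f y') →
      ∃ w : L, (w = x ∨ w = y) ∧ (w = x' ∨ w = y') ∧ p = f w)

/-- A covering `S7` in a lattice: seven pairwise distinct elements
`o, a, b, c, d, e, t` with the prescribed covering relations, meets and joins.
The pair `(d, t)` is its middle edge. -/
def IsCoveringS7 {L : Type*} [Lattice L] (o a b c d e t : L) : Prop :=
  [o, a, b, c, d, e, t].Pairwise (· ≠ ·) ∧
  o ⋖ a ∧ o ⋖ b ∧ a ⋖ c ∧ a ⋖ d ∧ b ⋖ d ∧ b ⋖ e ∧ c ⋖ t ∧ d ⋖ t ∧ e ⋖ t ∧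
  a ⊓ b = o ∧ a ⊔ b = d ∧ c ⊓ d = a ∧ d ⊓ e = b ∧ c ⊓ e = o ∧
  c ⊔ d = t ∧ d ⊔ e = t ∧ c ⊔ e = t

/-- `(x, y)` is the middle edge of some covering `S7` in the lattice. -/
def IsMiddleEdgeOfS7 {L : Type*} [Lattice L] (x y : L) : Prop :=
  ∃ o a b c e : L, IsCoveringS7 o a b c x e y

/-- A Czédli diagram: a planar diagram in which the middle edge of any covering `S7`
is steep and all other edges are normal. -/
def IsCzedliDiagram {L : Type*} [Lattice L] (f : L → ℝ × ℝ) : Prop :=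
  IsPlanarDiagram f ∧
  ∀ x y : L, x ⋖ y →
    (IsMiddleEdgeOfS7 x y → IsSteepEdge (f x) (f y)) ∧
    (¬ IsMiddleEdgeOfS7 x y → IsNormalEdge (f x) (f y))



section CzedliAux
variable {m n : ℕ}

noncomputable def gg (p : Fin (m+1) × Fin (n+1)) : ℝ × ℝ :=
  (((p.2 : ℕ) : ℝ) - ((p.1 : ℕ) : ℝ), ((p.1 : ℕ) : ℝ) + ((p.2 : ℕ) : ℝ))

lemma covby_iff' {x y : Fin (m+1) × Fin (n+1)} :
    x ⋖ y ↔ ((x.1 : ℕ) + 1 = (y.1 : ℕ) ∧ x.2 = y.2) ∨ (x.1 = y.1 ∧ (x.2 : ℕ) + 1 = (y.2 : ℕ)) := by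
  rw [Prod.covBy_iff, ← Fin.coe_covBy_iff, ← Fin.coe_covBy_iff,
    Nat.covBy_iff_add_one_eq, Nat.covBy_iff_add_one_eq]
  tauto

lemma seg_param (u : ℝ × ℝ) (ε : ℝ) {p : ℝ × ℝ} :
    p ∈ segment ℝ u (u.1 + ε, u.2 + 1) ↔
      ∃ t, 0 ≤ t ∧ t ≤ 1 ∧ p.1 = u.1 + t * ε ∧ p.2 = u.2 + t := by
  rw [segment_eq_image']
  constructor
  · rintro ⟨t, ⟨h0, h1⟩, rfl⟩
    exact ⟨t, h0, h1, by simp [Prod.smul_def, smul_eq_mul], by simp [Prod.smul_def, smul_eq_mul]⟩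
  · rintro ⟨t, h0, h1, hp1, hp2⟩
    exact ⟨t, ⟨h0, h1⟩, by ext <;> simp [Prod.smul_def, smul_eq_mul, hp1, hp2]⟩

lemma gg_inj : Function.Injective (gg (m := m) (n := n)) := by
  intro p q h
  simp only [gg, Prod.mk.injEq] at h
  obtain ⟨h1, h2⟩ := h
  have e1 : ((p.1 : ℕ) : ℝ) = ((q.1 : ℕ) : ℝ) := by linarith
  have e2 : ((p.2 : ℕ) : ℝ) = ((q.2 : ℕ) : ℝ) := by linarith
  have e1' : (p.1 : ℕ) = (q.1 : ℕ) := by exact_mod_cast e1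
  have e2' : (p.2 : ℕ) = (q.2 : ℕ) := by exact_mod_cast e2
  exact Prod.ext_iff.2 ⟨Fin.val_injective e1', Fin.val_injective e2'⟩

lemma gg_j {x y : Fin (m+1) × Fin (n+1)} (h1 : x.1 = y.1) (h2 : (x.2 : ℕ) + 1 = (y.2 : ℕ)) :
    gg y = ((gg x).1 + 1, (gg x).2 + 1) := by
  simp only [gg, ← h1, ← h2, Prod.mk.injEq]
  push_cast
  constructor <;> ring

lemma gg_i {x y : Fin (m+1) × Fin (n+1)} (h1 : (x.1 : ℕ) + 1 = (y.1 : ℕ)) (h2 : x.2 = y.2) :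
    gg y = ((gg x).1 + (-1), (gg x).2 + 1) := by
  simp only [gg, ← h1, ← h2, Prod.mk.injEq]
  push_cast
  constructor <;> ring

lemma nat01 {a b : ℕ} {t : ℝ} (h : t = (a : ℝ) - b) (h0 : 0 ≤ t) (h1 : t ≤ 1) :
    t = 0 ∨ t = 1 := by
  have hkt : (((a : ℤ) - b : ℤ) : ℝ) = t := by push_cast; linarith
  have hk0 : (0 : ℤ) ≤ (a : ℤ) - b := by exact_mod_cast hkt ▸ h0
  have hk1 : (a : ℤ) - b ≤ 1 := by exact_mod_cast hkt ▸ h1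
  have : (a : ℤ) - b = 0 ∨ (a : ℤ) - b = 1 := by omega
  rcases this with h | h <;> rw [h] at hkt <;> [left; right] <;> exact_mod_cast hkt.symm

lemma natpm1 {a b : ℕ} {t s : ℝ} (hab : a ≠ b) (h : t - s = (a : ℝ) - b)
    (t0 : 0 ≤ t) (t1 : t ≤ 1) (s0 : 0 ≤ s) (s1 : s ≤ 1) :
    (t = 0 ∨ t = 1) ∧ (s = 0 ∨ s = 1) := by
  have hkt : (((a : ℤ) - b : ℤ) : ℝ) = t - s := by push_cast; linarith
  have hkm : (-1 : ℤ) ≤ (a : ℤ) - b := by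
    have : (-1 : ℝ) ≤ t - s := by linarith
    exact_mod_cast hkt ▸ this
  have hk1 : (a : ℤ) - b ≤ 1 := by
    have : t - s ≤ 1 := by linarith
    exact_mod_cast hkt ▸ this
  have hk0 : (a : ℤ) - b ≠ 0 := by omega
  have : (a : ℤ) - b = 1 ∨ (a : ℤ) - b = -1 := by omega
  rcases this with h' | h' <;> rw [h'] at hkt
  · have : t - s = 1 := by exact_mod_cast hkt.symm
    exact ⟨Or.inr (by linarith), Or.inl (by linarith)⟩
  · have : t - s = -1 := by exact_mod_cast hkt.symm
    exact ⟨Or.inl (by linarith), Or.inr (by linarith)⟩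

lemma fin_eq_of_val {k : ℕ} {a b : Fin k} (h : (a : ℕ) = b) : a = b := Fin.val_injective h

end CzedliAux

section CzedliMain
variable {m n : ℕ}

lemma lower_eq_ii {u v y : Fin (m+1) × Fin (n+1)}
    (hu : (u.1 : ℕ) + 1 = (y.1 : ℕ) ∧ u.2 = y.2)
    (hv : (v.1 : ℕ) + 1 = (y.1 : ℕ) ∧ v.2 = y.2) : u = v :=
  Prod.ext_iff.2 ⟨fin_eq_of_val (by omega), hu.2.trans hv.2.symm⟩

lemma lower_eq_jj {u v y : Fin (m+1) × Fin (n+1)}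
    (hu : u.1 = y.1 ∧ (u.2 : ℕ) + 1 = (y.2 : ℕ))
    (hv : v.1 = y.1 ∧ (v.2 : ℕ) + 1 = (y.2 : ℕ)) : u = v :=
  Prod.ext_iff.2 ⟨hu.1.trans hv.1.symm, fin_eq_of_val (by omega)⟩

lemma no_s7 (x y : Fin (m+1) × Fin (n+1)) : ¬ IsMiddleEdgeOfS7 x y := by
  rintro ⟨o, a, b, c, e, hpw, -, -, -, -, -, -, hct, hdt, het, -, -, -, -, -, -, -, -⟩
  have hcx : c ≠ x := by simp [List.pairwise_cons] at hpw; tauto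
  have hce : c ≠ e := by simp [List.pairwise_cons] at hpw; tauto
  have hxe : x ≠ e := by simp [List.pairwise_cons] at hpw; tauto
  rcases covby_iff'.1 hct with hc | hc <;> rcases covby_iff'.1 hdt with hd | hd <;>
    rcases covby_iff'.1 het with he | he
  · exact hcx (lower_eq_ii hc hd)
  · exact hcx (lower_eq_ii hc hd)
  · exact hce (lower_eq_ii hc he)
  · exact hxe (lower_eq_jj hd he)
  · exact hxe (lower_eq_ii hd he)
  · exact hce (lower_eq_jj hc he)
  · exact hcx (lower_eq_jj hc hd)
  · exact hcx (lower_eq_jj hc hd)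

lemma endpoint_j {x y : Fin (m+1) × Fin (n+1)} {p : ℝ × ℝ} {t : ℝ}
    (h1 : x.1 = y.1) (h2 : (x.2 : ℕ) + 1 = (y.2 : ℕ)) (ht : t = 0 ∨ t = 1)
    (hp1 : p.1 = (gg x).1 + t * 1) (hp2 : p.2 = (gg x).2 + t) :
    p = gg x ∨ p = gg y := by
  rcases ht with rfl | rfl
  · left; exact Prod.ext_iff.2 ⟨by rw [hp1]; ring, by rw [hp2]; ring⟩
  · right; rw [gg_j h1 h2]; exact Prod.ext_iff.2 ⟨by rw [hp1]; ring, by rw [hp2]⟩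

lemma endpoint_i {x y : Fin (m+1) × Fin (n+1)} {p : ℝ × ℝ} {t : ℝ}
    (h1 : (x.1 : ℕ) + 1 = (y.1 : ℕ)) (h2 : x.2 = y.2) (ht : t = 0 ∨ t = 1)
    (hp1 : p.1 = (gg x).1 + t * (-1)) (hp2 : p.2 = (gg x).2 + t) :
    p = gg x ∨ p = gg y := by
  rcases ht with rfl | rfl
  · left; exact Prod.ext_iff.2 ⟨by rw [hp1]; ring, by rw [hp2]; ring⟩
  · right; rw [gg_i h1 h2]; exact Prod.ext_iff.2 ⟨by rw [hp1]; ring, by rw [hp2]⟩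

lemma finish_w {x y x' y' : Fin (m+1) × Fin (n+1)} {p : ℝ × ℝ}
    (h1 : p = gg x ∨ p = gg y) (h2 : p = gg x' ∨ p = gg y') :
    ∃ w : Fin (m+1) × Fin (n+1), (w = x ∨ w = y) ∧ (w = x' ∨ w = y') ∧ p = gg w := by
  rcases h1 with h1 | h1 <;> rcases h2 with h2 | h2
  · exact ⟨x, Or.inl rfl, Or.inl (gg_inj (h1.symm.trans h2)), h1⟩
  · exact ⟨x, Or.inl rfl, Or.inr (gg_inj (h1.symm.trans h2)), h1⟩
  · exact ⟨y, Or.inr rfl, Or.inl (gg_inj (h1.symm.trans h2)), h1⟩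
  · exact ⟨y, Or.inr rfl, Or.inr (gg_inj (h1.symm.trans h2)), h1⟩

end CzedliMain

/-- Every direct product of two finite nonempty chains (a grid, with the
componentwise order) admits a Czédli diagram. -/
theorem grid_has_czedli_diagram (m n : ℕ) :
    ∃ f : Fin (m + 1) × Fin (n + 1) → ℝ × ℝ, IsCzedliDiagram f := by
  refine ⟨gg, ⟨gg_inj, ?_, ?_, ?_⟩, ?_⟩
  · -- monotone in second coordinate
    intro x y hxy
    have hle := le_of_lt hxy
    have h1 : (x.1 : ℕ) ≤ (y.1 : ℕ) := hle.1
    have h2 : (x.2 : ℕ) ≤ (y.2 : ℕ) := hle.2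
    have hne : (x.1 : ℕ) ≠ (y.1 : ℕ) ∨ (x.2 : ℕ) ≠ (y.2 : ℕ) := by
      by_contra hc
      push_neg at hc
      exact absurd (Prod.ext_iff.2 ⟨fin_eq_of_val hc.1, fin_eq_of_val hc.2⟩) (ne_of_lt hxy)
    have : (x.1 : ℕ) + (x.2 : ℕ) < (y.1 : ℕ) + (y.2 : ℕ) := by omega
    simp only [gg]
    exact_mod_cast this
  · -- no third vertex on an edge
    intro x y hxy z hzx hzy hmem
    rcases covby_iff'.1 hxy with ⟨h1, h2⟩ | ⟨h1, h2⟩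
    · rw [gg_i h1 h2] at hmem
      obtain ⟨t, t0, t1, hp1, hp2⟩ := (seg_param _ _).1 hmem
      have ht : t = ((((z.1 : ℕ) + (z.2 : ℕ)) : ℕ) : ℝ) - (((x.1 : ℕ) + (x.2 : ℕ) : ℕ) : ℝ) := by
        simp only [gg] at hp2; push_cast; linarith
      rcases endpoint_i h1 h2 (nat01 ht t0 t1) hp1 hp2 with h | h
      · exact hzx (gg_inj h)
      · exact hzy (gg_inj h)
    · rw [gg_j h1 h2] at hmem
      obtain ⟨t, t0, t1, hp1, hp2⟩ := (seg_param _ _).1 hmem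
      have ht : t = ((((z.1 : ℕ) + (z.2 : ℕ)) : ℕ) : ℝ) - (((x.1 : ℕ) + (x.2 : ℕ) : ℕ) : ℝ) := by
        simp only [gg] at hp2; push_cast; linarith
      rcases endpoint_j h1 h2 (nat01 ht t0 t1) hp1 hp2 with h | h
      · exact hzx (gg_inj h)
      · exact hzy (gg_inj h)
  · -- edges meet only at common endpoints
    intro x y x' y' hxy hxy' hne p hp hp'
    rcases covby_iff'.1 hxy with ⟨h1, h2⟩ | ⟨h1, h2⟩ <;>
      rcases covby_iff'.1 hxy' with ⟨h1', h2'⟩ | ⟨h1', h2'⟩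
    · -- both i-steps
      rw [gg_i h1 h2] at hp
      rw [gg_i h1' h2'] at hp'
      obtain ⟨t, t0, t1, hq1, hq2⟩ := (seg_param _ _).1 hp
      obtain ⟨s, s0, s1, hr1, hr2⟩ := (seg_param _ _).1 hp'
      simp only [gg] at hq1 hq2 hr1 hr2
      have hx2 : ((x.2 : ℕ) : ℝ) = ((x'.2 : ℕ) : ℝ) := by linarith
      have hx2' : (x.2 : ℕ) = (x'.2 : ℕ) := by exact_mod_cast hx2
      have hx1 : (x.1 : ℕ) ≠ (x'.1 : ℕ) := by
        intro hc
        apply hne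
        have hxx : x = x' := Prod.ext_iff.2 ⟨fin_eq_of_val hc, fin_eq_of_val hx2'⟩
        have hyy : y = y' := Prod.ext_iff.2
          ⟨fin_eq_of_val (by omega), (h2.symm.trans (hxx ▸ h2'))⟩
        rw [hxx, hyy]
      have hts : t - s = ((x'.1 : ℕ) : ℝ) - ((x.1 : ℕ) : ℝ) := by linarith
      obtain ⟨ht, hs⟩ := natpm1 (Ne.symm hx1) hts t0 t1 s0 s1
      exact finish_w (endpoint_i h1 h2 ht hq1 hq2) (endpoint_i h1' h2' hs hr1 hr2)
    · -- i-step and j-step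
      rw [gg_i h1 h2] at hp
      rw [gg_j h1' h2'] at hp'
      obtain ⟨t, t0, t1, hq1, hq2⟩ := (seg_param _ _).1 hp
      obtain ⟨s, s0, s1, hr1, hr2⟩ := (seg_param _ _).1 hp'
      simp only [gg] at hq1 hq2 hr1 hr2
      have ht : t = ((x'.1 : ℕ) : ℝ) - ((x.1 : ℕ) : ℝ) := by linarith
      have hs : s = ((x.2 : ℕ) : ℝ) - ((x'.2 : ℕ) : ℝ) := by linarith
      exact finish_w (endpoint_i h1 h2 (nat01 ht t0 t1) hq1 hq2)
        (endpoint_j h1' h2' (nat01 hs s0 s1) hr1 hr2)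
    · -- j-step and i-step
      rw [gg_j h1 h2] at hp
      rw [gg_i h1' h2'] at hp'
      obtain ⟨t, t0, t1, hq1, hq2⟩ := (seg_param _ _).1 hp
      obtain ⟨s, s0, s1, hr1, hr2⟩ := (seg_param _ _).1 hp'
      simp only [gg] at hq1 hq2 hr1 hr2
      have ht : t = ((x'.2 : ℕ) : ℝ) - ((x.2 : ℕ) : ℝ) := by linarith
      have hs : s = ((x.1 : ℕ) : ℝ) - ((x'.1 : ℕ) : ℝ) := by linarith
      exact finish_w (endpoint_j h1 h2 (nat01 ht t0 t1) hq1 hq2)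
        (endpoint_i h1' h2' (nat01 hs s0 s1) hr1 hr2)
    · -- both j-steps
      rw [gg_j h1 h2] at hp
      rw [gg_j h1' h2'] at hp'
      obtain ⟨t, t0, t1, hq1, hq2⟩ := (seg_param _ _).1 hp
      obtain ⟨s, s0, s1, hr1, hr2⟩ := (seg_param _ _).1 hp'
      simp only [gg] at hq1 hq2 hr1 hr2
      have hx1 : ((x.1 : ℕ) : ℝ) = ((x'.1 : ℕ) : ℝ) := by linarith
      have hx1' : (x.1 : ℕ) = (x'.1 : ℕ) := by exact_mod_cast hx1
      have hx2 : (x.2 : ℕ) ≠ (x'.2 : ℕ) := by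
        intro hc
        apply hne
        have hxx : x = x' := Prod.ext_iff.2 ⟨fin_eq_of_val hx1', fin_eq_of_val hc⟩
        have hyy : y = y' := Prod.ext_iff.2
          ⟨h1.symm.trans (hxx ▸ h1'), fin_eq_of_val (by omega)⟩
        rw [hxx, hyy]
      have hts : t - s = ((x'.2 : ℕ) : ℝ) - ((x.2 : ℕ) : ℝ) := by linarith
      obtain ⟨ht, hs⟩ := natpm1 (Ne.symm hx2) hts t0 t1 s0 s1
      exact finish_w (endpoint_j h1 h2 ht hq1 hq2) (endpoint_j h1' h2' hs hr1 hr2)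
  · -- all edges normal, no middle edges
    intro x y hxy
    refine ⟨fun h => absurd h (no_s7 x y), fun _ => ?_⟩
    unfold IsNormalEdge
    rcases covby_iff'.1 hxy with ⟨h1, h2⟩ | ⟨h1, h2⟩
    · rw [gg_i h1 h2]; norm_num
    · rw [gg_j h1 h2]; norm_num
end

section
/- With the quadrilateral configuration as in the context, the point p = o + (β − α, β + α) is the unique point lying both on the line {a + t • (1, 1) : t ∈ ℝ} through a with direction (1, 1) and on the line {b + s • (−1, 1) : s ∈ ℝ} through b with direction (−1, 1); moreover p lies strictly inside the 4-cell, in the sense that cross((−1, 1), p − o) < 0, cross((1, 1), p − o) > 0, cross((u₁, v₁), p − c) < 0, and cross((u₂, v₂), p − d) > 0, where cross(u, w) = u.1 * w.2 − u.2 * w.1 for u w : ℝ × ℝ. -/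
/-- The planar cross product `u.1 * w.2 - u.2 * w.1`. -/
def cross (u w : ℝ × ℝ) : ℝ := u.1 * w.2 - u.2 * w.1

/-- In the 4-cell with bottom `o`, left corner `c`, right corner `d` and top `i`,
whose lower edges are normal and whose upper edges are normal or steep, the point
`p = o + (β - α, β + α)` is the unique common point of the normal-up line through
`a = o + α • (-1, 1)` and the normal-down line through `b = o + β • (1, 1)`,
and `p` lies strictly inside the 4-cell. -/
theorem fork_point_unique_and_inside
    (o c d i : ℝ × ℝ) (γ δ α β u₁ v₁ u₂ v₂ : ℝ)
    (hα : 0 < α) (hαγ : α < γ) (hβ : 0 < β) (hβδ : β < δ)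
    (hc : c = o + γ • ((-1 : ℝ), (1 : ℝ))) (hd : d = o + δ • ((1 : ℝ), (1 : ℝ)))
    (hic : i - c = (u₁, v₁)) (hu₁ : |u₁| ≤ v₁) (hv₁ : 0 < v₁)
    (hid : i - d = (u₂, v₂)) (hu₂ : |u₂| ≤ v₂) (hv₂ : 0 < v₂)
    (a b p : ℝ × ℝ)
    (ha : a = o + α • ((-1 : ℝ), (1 : ℝ))) (hb : b = o + β • ((1 : ℝ), (1 : ℝ)))
    (hp : p = o + (β - α, β + α)) :
    ((∃ t : ℝ, p = a + t • ((1 : ℝ), (1 : ℝ))) ∧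
     (∃ s : ℝ, p = b + s • ((-1 : ℝ), (1 : ℝ))) ∧
     (∀ q : ℝ × ℝ, (∃ t : ℝ, q = a + t • ((1 : ℝ), (1 : ℝ))) →
        (∃ s : ℝ, q = b + s • ((-1 : ℝ), (1 : ℝ))) → q = p)) ∧
    cross ((-1 : ℝ), (1 : ℝ)) (p - o) < 0 ∧
    cross ((1 : ℝ), (1 : ℝ)) (p - o) > 0 ∧
    cross (u₁, v₁) (p - c) < 0 ∧
    cross (u₂, v₂) (p - d) > 0 := by
  obtain ⟨hu1l, hu1r⟩ := abs_le.mp hu₁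
  obtain ⟨hu2l, hu2r⟩ := abs_le.mp hu₂
  subst hc hd ha hb hp
  refine ⟨⟨⟨β, ?_⟩, ⟨α, ?_⟩, ?_⟩, ?_, ?_, ?_, ?_⟩
  · simp [Prod.ext_iff]; constructor <;> ring
  · simp [Prod.ext_iff]; constructor <;> ring
  · rintro q ⟨t, ht⟩ ⟨s, hs⟩
    have h1 := congrArg Prod.fst ht
    have h2 := congrArg Prod.snd ht
    have h3 := congrArg Prod.fst hs
    have h4 := congrArg Prod.snd hs
    simp at h1 h2 h3 h4
    have : q = (q.1, q.2) := rfl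
    rw [this]
    simp [Prod.ext_iff]
    constructor <;> linarith
  · simp [cross]; nlinarith
  · simp [cross]; nlinarith
  · simp [cross]
    rcases le_or_gt (β + α - γ) 0 with h | h
    · nlinarith
    · nlinarith
  · simp [cross]
    rcases le_or_gt (β + α - δ) 0 with h | h
    · nlinarith
    · nlinarith
end

section
/- With the quadrilateral configuration as in the context, the edge from the intersection point p = o + (β − α, β + α) to the top vertex i is steep: |i.1 − p.1| < i.2 − p.2. -/
/-- In the 4-cell with bottom `o`, left corner `c`, right corner `d` and top `i`,
whose lower edges are normal and whose upper edges are normal or steep, the edge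
from the intersection point `p = o + (β - α, β + α)` to the top `i` is steep. -/
theorem fork_middle_edge_is_steep
    (o c d i : ℝ × ℝ) (γ δ α β u₁ v₁ u₂ v₂ : ℝ)
    (hα : 0 < α) (hαγ : α < γ) (hβ : 0 < β) (hβδ : β < δ)
    (hc : c = o + γ • ((-1 : ℝ), (1 : ℝ))) (hd : d = o + δ • ((1 : ℝ), (1 : ℝ)))
    (hic : i - c = (u₁, v₁)) (hu₁ : |u₁| ≤ v₁) (hv₁ : 0 < v₁)
    (hid : i - d = (u₂, v₂)) (hu₂ : |u₂| ≤ v₂) (hv₂ : 0 < v₂)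
    (p : ℝ × ℝ) (hp : p = o + (β - α, β + α)) :
    IsSteepEdge p i := by
  have h1 := congrArg Prod.fst hic
  have h2 := congrArg Prod.snd hic
  have h3 := congrArg Prod.fst hid
  have h4 := congrArg Prod.snd hid
  have habs1 := abs_le.mp hu₁
  have habs2 := abs_le.mp hu₂
  simp only [hc, hd, Prod.smul_mk, smul_eq_mul, Prod.fst_sub, Prod.snd_sub, Prod.fst_add,
    Prod.snd_add] at h1 h2 h3 h4
  unfold IsSteepEdge
  rw [hp, abs_lt]
  simp only [Prod.fst_add, Prod.snd_add]
  constructor <;> linarith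
end

section
/- Let L be a semimodular lattice, i.e., for all u v : L, u ⊓ v ⋖ u implies v ⋖ u ⊔ v. Suppose a, a*, a^*, b ∈ L satisfy: a* ⋖ a, a* ⋖ b, a ≠ b, a ⋖ a^*, and a^* is the unique upper cover of a (for every t, a ⋖ t implies t = a^*). Then a ⊔ b = a^* and a* < b < a^*. In particular, the open interval (a*, a^*) contains an element different from a, so after removing a from L the pair (a*, a^*) is not a covering pair. -/
/-- In a semimodular lattice, if `a` has lower cover `astar` (also covered by some
`b ≠ a`) and unique upper cover `aup`, then `a ⊔ b = aup` and `astar < b < aup`;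
in particular the open interval `(astar, aup)` contains an element different from
`a`, so after removing `a` the pair `(astar, aup)` is not a covering pair. -/
theorem join_with_cover_of_unique_lower_cover
    {L : Type*} [Lattice L]
    (hsemi : ∀ u v : L, u ⊓ v ⋖ u → v ⋖ u ⊔ v)
    (a astar aup b : L)
    (h₁ : astar ⋖ a) (h₂ : astar ⋖ b) (hab : a ≠ b)
    (h₃ : a ⋖ aup) (huniq : ∀ t : L, a ⋖ t → t = aup) :
    a ⊔ b = aup ∧ astar < b ∧ b < aup := by
  -- a ⊓ b = astar
  have hne : a ⊓ b ≠ a := by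
    intro h
    have hle : a ≤ b := inf_eq_left.mp h
    have hlt : a < b := hle.lt_of_ne hab
    exact h₂.2 h₁.1 hlt
  have hinf : a ⊓ b = astar := by
    rcases (le_inf h₁.le h₂.le).lt_or_eq with h | h
    · exact absurd (inf_le_left.lt_of_ne hne) (h₁.2 h)
    · exact h.symm
  -- semimodularity: b ⋖ a ⊔ b and a ⋖ a ⊔ b
  have hcov1 : b ⋖ a ⊔ b := hsemi a b (hinf ▸ h₁)
  have hcov2 : a ⋖ b ⊔ a := by
    apply hsemi b a
    rw [inf_comm, hinf]
    exact h₂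
  have hjoin : a ⊔ b = aup := by
    have := huniq (b ⊔ a) hcov2
    rw [sup_comm]; exact this
  exact ⟨hjoin, h₂.lt, hjoin ▸ hcov1.lt⟩
end
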